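/- Let p > 2 be prime and fix a nonzero constant C ∈ F_p. For r = (r_1,…,r_9) ∈ F_p^9 define the character sum S(r) = E_{a,b,c,d ∈ F_p}[Exp_p(r_1 a + r_2 b + r_3 ac + r_4(ad+bc) + r_5 bd + r_6 C a c² + r_7 C(b c² + 2acd) + r_8 C(2bcd + a d²) + r_9 C b d²)]. Then S(r) = Pr_{c,d}[h(c,d) = h'(c,d) = 0] where h(c,d) = r_1 + r_3 c + r_4 d + C r_6 c² + 2C r_7 cd + C r_8 d² and h'(c,d) = r_2 + r_4 c + r_5 d + C r_7 c² + 2C r_8 cd + C r_9 d². In particular, if r ≠ 0 then S(r) ≤ 2/p. -/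

import Mathlib

open Finset Polynomial

lemma lin_card (p : ℕ) [Fact p.Prime] (b c : ZMod p) (h : ¬(b = 0 ∧ c = 0)) :
    (Finset.univ.filter fun x : ZMod p => b * x + c = 0).card ≤ 1 := by
  rcases eq_or_ne b 0 with hb | hb
  · have hc : c ≠ 0 := fun hc => h ⟨hb, hc⟩
    have : (Finset.univ.filter fun x : ZMod p => b * x + c = 0) = ∅ := by
      ext x; simp [hb, hc]
    simp [this]
  · apply Finset.card_le_one.mpr
    intro x hx y hy
    simp only [mem_filter, mem_univ, true_and] at hx hy
    have hxy : b * x = b * y := by linear_combination hx - hy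
    exact mul_left_cancel₀ hb hxy

lemma quad_card (p : ℕ) [Fact p.Prime] (a b c : ZMod p) (h : ¬(a = 0 ∧ b = 0 ∧ c = 0)) :
    (Finset.univ.filter fun x : ZMod p => a * x ^ 2 + b * x + c = 0).card ≤ 2 := by
  set P : Polynomial (ZMod p) := C a * X ^ 2 + C b * X + C c with hPdef
  have hP : P ≠ 0 := by
    intro h0
    refine h ⟨?_, ?_, ?_⟩
    · have := congrArg (fun q => Polynomial.coeff q 2) h0
      simpa [hPdef, coeff_one, coeff_X] using this
    · have := congrArg (fun q => Polynomial.coeff q 1) h0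
      simpa [hPdef, coeff_one, coeff_X] using this
    · have := congrArg (fun q => Polynomial.coeff q 0) h0
      simpa [hPdef, coeff_one, coeff_X] using this
  have hsub : (Finset.univ.filter fun x : ZMod p => a * x ^ 2 + b * x + c = 0)
      ⊆ P.roots.toFinset := by
    intro x hx
    simp only [mem_filter, mem_univ, true_and] at hx
    rw [Multiset.mem_toFinset, mem_roots hP]
    simpa [hPdef, IsRoot] using hx
  calc (Finset.univ.filter fun x : ZMod p => a * x ^ 2 + b * x + c = 0).card
      ≤ P.roots.toFinset.card := Finset.card_le_card hsub
    _ ≤ Multiset.card P.roots := Multiset.toFinset_card_le _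
    _ ≤ P.natDegree := P.card_roots'
    _ ≤ 2 := natDegree_quadratic_le

lemma conic_card (p : ℕ) [Fact p.Prime] (α β γ δ ε ζ : ZMod p)
    (h : ¬(α = 0 ∧ β = 0 ∧ γ = 0 ∧ δ = 0 ∧ ε = 0 ∧ ζ = 0)) :
    (Finset.univ.filter fun cd : ZMod p × ZMod p =>
      ζ + δ * cd.1 + ε * cd.2 + α * cd.1 ^ 2 + β * (cd.1 * cd.2) + γ * cd.2 ^ 2 = 0).card
      ≤ 2 * p := by
  have key : (Finset.univ.filter fun cd : ZMod p × ZMod p =>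
      ζ + δ * cd.1 + ε * cd.2 + α * cd.1 ^ 2 + β * (cd.1 * cd.2) + γ * cd.2 ^ 2 = 0).card
      = ∑ c : ZMod p, (Finset.univ.filter fun d : ZMod p =>
        ζ + δ * c + ε * d + α * c ^ 2 + β * (c * d) + γ * d ^ 2 = 0).card := by
    rw [Finset.card_filter, Fintype.sum_prod_type]
    exact Finset.sum_congr rfl fun c _ => (Finset.card_filter _ _).symm
  rw [key]
  rcases eq_or_ne γ 0 with hγ | hγ
  · rcases Classical.em (β = 0 ∧ ε = 0) with ⟨hβ, hε⟩ | hβε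
    · have hv : ¬(α = 0 ∧ δ = 0 ∧ ζ = 0) := by
        rintro ⟨h1, h2, h3⟩; exact h ⟨h1, hβ, hγ, h2, hε, h3⟩
      have heval : ∀ c : ZMod p, (Finset.univ.filter fun d : ZMod p =>
          ζ + δ * c + ε * d + α * c ^ 2 + β * (c * d) + γ * d ^ 2 = 0).card
          = if α * c ^ 2 + δ * c + ζ = 0 then p else 0 := by
        intro c
        rcases eq_or_ne (α * c ^ 2 + δ * c + ζ) 0 with hc | hc
        · rw [if_pos hc]
          have : (Finset.univ.filter fun d : ZMod p =>
              ζ + δ * c + ε * d + α * c ^ 2 + β * (c * d) + γ * d ^ 2 = 0) = Finset.univ := by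
            ext d; simp only [mem_filter, mem_univ, true_and, iff_true]
            rw [hβ, hε, hγ]; linear_combination hc
          rw [this, Finset.card_univ, ZMod.card]
        · rw [if_neg hc]
          have : (Finset.univ.filter fun d : ZMod p =>
              ζ + δ * c + ε * d + α * c ^ 2 + β * (c * d) + γ * d ^ 2 = 0) = ∅ := by
            ext d; simp only [mem_filter, mem_univ, true_and, notMem_empty, iff_false]
            intro hd; exact hc (by rw [hβ, hε, hγ] at hd; linear_combination hd)
          rw [this, Finset.card_empty]
      calc ∑ c : ZMod p, (Finset.univ.filter fun d : ZMod p =>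
            ζ + δ * c + ε * d + α * c ^ 2 + β * (c * d) + γ * d ^ 2 = 0).card
          = ∑ c : ZMod p, if α * c ^ 2 + δ * c + ζ = 0 then p else 0 :=
            Finset.sum_congr rfl fun c _ => heval c
        _ = (Finset.univ.filter fun c : ZMod p => α * c ^ 2 + δ * c + ζ = 0).card * p := by
            rw [← Finset.sum_filter, Finset.sum_const, smul_eq_mul]
        _ ≤ 2 * p := Nat.mul_le_mul_right p (quad_card p α δ ζ hv)
    · rw [← Finset.sum_filter_add_sum_filter_not Finset.univ (fun c : ZMod p => β * c + ε = 0)]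
      have h1 : ∑ c ∈ Finset.univ.filter (fun c : ZMod p => β * c + ε = 0),
          (Finset.univ.filter fun d : ZMod p =>
            ζ + δ * c + ε * d + α * c ^ 2 + β * (c * d) + γ * d ^ 2 = 0).card ≤ p := by
        calc _ ≤ ∑ c ∈ Finset.univ.filter (fun c : ZMod p => β * c + ε = 0), p := by
              refine Finset.sum_le_sum fun c _ => ?_
              calc (Finset.univ.filter fun d : ZMod p =>
                    ζ + δ * c + ε * d + α * c ^ 2 + β * (c * d) + γ * d ^ 2 = 0).card
                  ≤ (Finset.univ : Finset (ZMod p)).card := Finset.card_filter_le _ _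
                _ = p := by rw [Finset.card_univ, ZMod.card]
          _ = (Finset.univ.filter (fun c : ZMod p => β * c + ε = 0)).card * p := by
              rw [Finset.sum_const, smul_eq_mul]
          _ ≤ 1 * p := Nat.mul_le_mul_right p (lin_card p β ε (by tauto))
          _ = p := one_mul p
      have h2 : ∑ c ∈ Finset.univ.filter (fun c : ZMod p => ¬(β * c + ε = 0)),
          (Finset.univ.filter fun d : ZMod p =>
            ζ + δ * c + ε * d + α * c ^ 2 + β * (c * d) + γ * d ^ 2 = 0).card ≤ p := by
        calc _ ≤ ∑ _c ∈ Finset.univ.filter (fun c : ZMod p => ¬(β * c + ε = 0)), 1 := by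
              refine Finset.sum_le_sum fun c hc => ?_
              simp only [mem_filter, mem_univ, true_and] at hc
              have := lin_card p (β * c + ε) (ζ + δ * c + α * c ^ 2) (by tauto)
              refine le_trans (le_of_eq ?_) this
              congr 1
              apply Finset.filter_congr
              intro d _
              constructor
              · intro hd; rw [hγ] at hd; linear_combination hd
              · intro hd; rw [hγ]; linear_combination hd
          _ = (Finset.univ.filter (fun c : ZMod p => ¬(β * c + ε = 0))).card := by
              rw [Finset.sum_const, smul_eq_mul, mul_one]
          _ ≤ (Finset.univ : Finset (ZMod p)).card := Finset.card_filter_le _ _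
          _ = p := by rw [Finset.card_univ, ZMod.card]
      omega
  · calc ∑ c : ZMod p, (Finset.univ.filter fun d : ZMod p =>
          ζ + δ * c + ε * d + α * c ^ 2 + β * (c * d) + γ * d ^ 2 = 0).card
        ≤ ∑ _c : ZMod p, 2 := by
          refine Finset.sum_le_sum fun c _ => ?_
          have := quad_card p γ (β * c + ε) (ζ + δ * c + α * c ^ 2) (by tauto)
          refine le_trans (le_of_eq ?_) this
          congr 1
          apply Finset.filter_congr
          intro d _
          constructor
          · intro hd; linear_combination hd
          · intro hd; linear_combination hd
      _ = 2 * p := by rw [Finset.sum_const, smul_eq_mul, Finset.card_univ, ZMod.card, mul_comm]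

lemma char_sum (p : ℕ) [Fact p.Prime] (e : ZMod p → ℂ)
    (he : ∀ z : ZMod p, e z = Complex.exp (2 * Real.pi * Complex.I * (z.val : ℂ) / p))
    (x : ZMod p) :
    ∑ a : ZMod p, e (a * x) = if x = 0 then (p : ℂ) else 0 := by
  haveI : NeZero p := ⟨(Fact.out : p.Prime).ne_zero⟩
  have hee : ∀ z : ZMod p, e z = ZMod.stdAddChar z := by
    intro z
    rw [he, ZMod.stdAddChar_apply, ZMod.toCircle_apply]
  calc ∑ a : ZMod p, e (a * x) = ∑ a : ZMod p, ZMod.stdAddChar (a * x) :=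
        Finset.sum_congr rfl fun a _ => hee _
    _ = if x = 0 then (p : ℂ) else 0 := by
        rw [AddChar.sum_mulShift x (ZMod.isPrimitive_stdAddChar p), ZMod.card]
        split_ifs <;> simp

lemma sum4_swap {α : Type*} [Fintype α] (G : α → α → α → α → ℂ) :
    ∑ a : α, ∑ b : α, ∑ c : α, ∑ d : α, G a b c d
      = ∑ c : α, ∑ d : α, ∑ a : α, ∑ b : α, G a b c d := by
  calc ∑ a : α, ∑ b : α, ∑ c : α, ∑ d : α, G a b c d
      = ∑ a : α, ∑ c : α, ∑ b : α, ∑ d : α, G a b c d :=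
        Finset.sum_congr rfl fun a _ => Finset.sum_comm
    _ = ∑ c : α, ∑ a : α, ∑ b : α, ∑ d : α, G a b c d := Finset.sum_comm
    _ = ∑ c : α, ∑ a : α, ∑ d : α, ∑ b : α, G a b c d :=
        Finset.sum_congr rfl fun c _ => Finset.sum_congr rfl fun a _ => Finset.sum_comm
    _ = ∑ c : α, ∑ d : α, ∑ a : α, ∑ b : α, G a b c d :=
        Finset.sum_congr rfl fun c _ => Finset.sum_comm

theorem stmt14 (p : ℕ) [Fact p.Prime] (hp : 2 < p) (C : ZMod p) (hC : C ≠ 0)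
    (r : Fin 9 → ZMod p)
    (e : ZMod p → ℂ)
    (he : ∀ z : ZMod p, e z = Complex.exp (2 * Real.pi * Complex.I * (z.val : ℂ) / p))
    (S : ℂ)
    (hS : S = (∑ a : ZMod p, ∑ b : ZMod p, ∑ c : ZMod p, ∑ d : ZMod p,
        e (r 0 * a + r 1 * b + r 2 * (a * c) + r 3 * (a * d + b * c) + r 4 * (b * d)
          + r 5 * C * (a * c ^ 2) + r 6 * C * (b * c ^ 2 + 2 * (a * c * d))
          + r 7 * C * (2 * (b * c * d) + a * d ^ 2) + r 8 * C * (b * d ^ 2)))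
      / (p : ℂ) ^ 4) :
    S = ((Finset.univ.filter (fun cd : ZMod p × ZMod p =>
          r 0 + r 2 * cd.1 + r 3 * cd.2 + C * r 5 * cd.1 ^ 2
              + 2 * C * r 6 * (cd.1 * cd.2) + C * r 7 * cd.2 ^ 2 = 0 ∧
          r 1 + r 3 * cd.1 + r 4 * cd.2 + C * r 6 * cd.1 ^ 2
              + 2 * C * r 7 * (cd.1 * cd.2) + C * r 8 * cd.2 ^ 2 = 0)).card : ℂ)
        / (p : ℂ) ^ 2 ∧
      (r ≠ 0 → ‖S‖ ≤ 2 / p) := by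
  haveI : NeZero p := ⟨(Fact.out : p.Prime).ne_zero⟩
  have hpn : p ≠ 0 := (Fact.out : p.Prime).ne_zero
  have hp0 : (p : ℂ) ≠ 0 := Nat.cast_ne_zero.mpr hpn
  have h2ne : (2 : ZMod p) ≠ 0 := by
    intro h20
    have hdvd : p ∣ 2 := (ZMod.natCast_eq_zero_iff 2 p).mp (by exact_mod_cast h20)
    have := Nat.le_of_dvd (by norm_num) hdvd
    omega
  have hee : ∀ z : ZMod p, e z = ZMod.stdAddChar z := by
    intro z
    rw [he, ZMod.stdAddChar_apply, ZMod.toCircle_apply]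
  have hmul : ∀ u v : ZMod p, e (u + v) = e u * e v := by
    intro u v
    rw [hee, hee, hee, AddChar.map_add_eq_mul]
  have hsum : ∀ x : ZMod p, ∑ a : ZMod p, e (a * x) = if x = 0 then (p : ℂ) else 0 :=
    char_sum p e he
  set H1 : ZMod p → ZMod p → ZMod p := fun c d =>
    r 0 + r 2 * c + r 3 * d + C * r 5 * c ^ 2 + 2 * C * r 6 * (c * d) + C * r 7 * d ^ 2
    with hH1
  set H2 : ZMod p → ZMod p → ZMod p := fun c d =>
    r 1 + r 3 * c + r 4 * d + C * r 6 * c ^ 2 + 2 * C * r 7 * (c * d) + C * r 8 * d ^ 2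
    with hH2
  set K := (Finset.univ.filter (fun cd : ZMod p × ZMod p =>
          r 0 + r 2 * cd.1 + r 3 * cd.2 + C * r 5 * cd.1 ^ 2
              + 2 * C * r 6 * (cd.1 * cd.2) + C * r 7 * cd.2 ^ 2 = 0 ∧
          r 1 + r 3 * cd.1 + r 4 * cd.2 + C * r 6 * cd.1 ^ 2
              + 2 * C * r 7 * (cd.1 * cd.2) + C * r 8 * cd.2 ^ 2 = 0)).card with hKdef
  have step1 : (∑ a : ZMod p, ∑ b : ZMod p, ∑ c : ZMod p, ∑ d : ZMod p,
        e (r 0 * a + r 1 * b + r 2 * (a * c) + r 3 * (a * d + b * c) + r 4 * (b * d)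
          + r 5 * C * (a * c ^ 2) + r 6 * C * (b * c ^ 2 + 2 * (a * c * d))
          + r 7 * C * (2 * (b * c * d) + a * d ^ 2) + r 8 * C * (b * d ^ 2)))
      = (K : ℂ) * (p : ℂ) ^ 2 := by
    have harg : ∀ a b c d : ZMod p,
        e (r 0 * a + r 1 * b + r 2 * (a * c) + r 3 * (a * d + b * c) + r 4 * (b * d)
          + r 5 * C * (a * c ^ 2) + r 6 * C * (b * c ^ 2 + 2 * (a * c * d))
          + r 7 * C * (2 * (b * c * d) + a * d ^ 2) + r 8 * C * (b * d ^ 2))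
        = e (a * H1 c d) * e (b * H2 c d) := by
      intro a b c d
      rw [← hmul]
      congr 1
      simp only [hH1, hH2]
      ring
    calc (∑ a : ZMod p, ∑ b : ZMod p, ∑ c : ZMod p, ∑ d : ZMod p,
        e (r 0 * a + r 1 * b + r 2 * (a * c) + r 3 * (a * d + b * c) + r 4 * (b * d)
          + r 5 * C * (a * c ^ 2) + r 6 * C * (b * c ^ 2 + 2 * (a * c * d))
          + r 7 * C * (2 * (b * c * d) + a * d ^ 2) + r 8 * C * (b * d ^ 2)))
        = ∑ a : ZMod p, ∑ b : ZMod p, ∑ c : ZMod p, ∑ d : ZMod p,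
            e (a * H1 c d) * e (b * H2 c d) := by
          refine Finset.sum_congr rfl fun a _ => Finset.sum_congr rfl fun b _ =>
            Finset.sum_congr rfl fun c _ => Finset.sum_congr rfl fun d _ => harg a b c d
      _ = ∑ c : ZMod p, ∑ d : ZMod p, ∑ a : ZMod p, ∑ b : ZMod p,
            e (a * H1 c d) * e (b * H2 c d) :=
          sum4_swap (fun a b c d => e (a * H1 c d) * e (b * H2 c d))
      _ = ∑ c : ZMod p, ∑ d : ZMod p,
            (∑ a : ZMod p, e (a * H1 c d)) * (∑ b : ZMod p, e (b * H2 c d)) := by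
          refine Finset.sum_congr rfl fun c _ => Finset.sum_congr rfl fun d _ => ?_
          rw [Finset.sum_mul_sum]
      _ = ∑ c : ZMod p, ∑ d : ZMod p,
            (if H1 c d = 0 ∧ H2 c d = 0 then ((p : ℂ)) ^ 2 else 0) := by
          refine Finset.sum_congr rfl fun c _ => Finset.sum_congr rfl fun d _ => ?_
          rw [hsum, hsum]
          by_cases hA : H1 c d = 0 <;> by_cases hB : H2 c d = 0 <;>
            simp [hA, hB] <;> ring
      _ = ∑ cd : ZMod p × ZMod p,
            (if H1 cd.1 cd.2 = 0 ∧ H2 cd.1 cd.2 = 0 then ((p : ℂ)) ^ 2 else 0) := by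
          rw [Fintype.sum_prod_type]
      _ = (K : ℂ) * (p : ℂ) ^ 2 := by
          rw [← Finset.sum_filter, Finset.sum_const, nsmul_eq_mul, hKdef]
  have hmain : S = (K : ℂ) / (p : ℂ) ^ 2 := by
    rw [hS, step1]
    field_simp
  refine ⟨hmain, ?_⟩
  intro hr
  have hw1 : ¬(C * r 5 = 0 ∧ 2 * C * r 6 = 0 ∧ C * r 7 = 0 ∧ r 2 = 0 ∧ r 3 = 0 ∧ r 0 = 0)
      → K ≤ 2 * p := by
    intro hz
    refine le_trans (Finset.card_le_card ?_)
      (conic_card p (C * r 5) (2 * C * r 6) (C * r 7) (r 2) (r 3) (r 0) hz)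
    intro cd hcd
    simp only [Finset.mem_filter, Finset.mem_univ, true_and] at hcd ⊢
    exact hcd.1
  have hw2 : ¬(C * r 6 = 0 ∧ 2 * C * r 7 = 0 ∧ C * r 8 = 0 ∧ r 3 = 0 ∧ r 4 = 0 ∧ r 1 = 0)
      → K ≤ 2 * p := by
    intro hz
    refine le_trans (Finset.card_le_card ?_)
      (conic_card p (C * r 6) (2 * C * r 7) (C * r 8) (r 3) (r 4) (r 1) hz)
    intro cd hcd
    simp only [Finset.mem_filter, Finset.mem_univ, true_and] at hcd ⊢
    exact hcd.2
  have h2C : 2 * C ≠ 0 := mul_ne_zero h2ne hC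
  have hKle : K ≤ 2 * p := by
    obtain ⟨i, hi⟩ := Function.ne_iff.mp hr
    simp only [Pi.zero_apply] at hi
    fin_cases i
    · exact hw1 (by rintro ⟨-, -, -, -, -, h6⟩; exact hi h6)
    · exact hw2 (by rintro ⟨-, -, -, -, -, h6⟩; exact hi h6)
    · exact hw1 (by rintro ⟨-, -, -, h4, -, -⟩; exact hi h4)
    · exact hw1 (by rintro ⟨-, -, -, -, h5, -⟩; exact hi h5)
    · exact hw2 (by rintro ⟨-, -, -, -, h5, -⟩; exact hi h5)
    · exact hw1 (by rintro ⟨h1, -, -, -, -, -⟩; exact hi ((mul_eq_zero.mp h1).resolve_left hC))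
    · exact hw1 (by rintro ⟨-, h2, -, -, -, -⟩; exact hi ((mul_eq_zero.mp h2).resolve_left h2C))
    · exact hw1 (by rintro ⟨-, -, h3, -, -, -⟩; exact hi ((mul_eq_zero.mp h3).resolve_left hC))
    · exact hw2 (by rintro ⟨-, -, h3, -, -, -⟩; exact hi ((mul_eq_zero.mp h3).resolve_left hC))
  rw [hmain, norm_div, norm_pow, Complex.norm_natCast, Complex.norm_natCast]
  have hppos : (0 : ℝ) < p := by exact_mod_cast Nat.pos_of_ne_zero hpn
  rw [div_le_div_iff₀ (pow_pos hppos 2) hppos]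
  have hKR : (K : ℝ) ≤ 2 * p := by exact_mod_cast hKle
  nlinarith [hppos, hKR]
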